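/- Let T be a semigroup, let J be a maximal J-class of T (i.e., J is the J-class of some element, and for all z ∈ J and y ∈ T, z ≤_J y implies y ≤_J z), and suppose every element z ∈ J is stable in the sense that z J z·u implies z R z·u for all u ∈ T. Then every generating subset X of T (a subset whose generated subsemigroup is all of T) contains at least one element from each R-class contained in J; in particular, any generating set of T has at least as many elements as there are R-classes in J. -/

import Mathlib

universe u

/-- Green's `≤_R` preorder on a semigroup. -/
def leR {S : Type u} [Mul S] (x y : S) : Prop := x = y ∨ ∃ a, x = y * a

/-- Green's `≤_J` preorder on a semigroup. -/
def leJ {S : Type u} [Mul S] (x y : S) : Prop :=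
  x = y ∨ (∃ a, x = a * y) ∨ (∃ b, x = y * b) ∨ ∃ a b, x = a * y * b

/-- Green's `R` relation. -/
def grR {S : Type u} [Mul S] (x y : S) : Prop := leR x y ∧ leR y x

/-- Green's `J` relation. -/
def grJ {S : Type u} [Mul S] (x y : S) : Prop := leJ x y ∧ leJ y x

theorem leJ_iff {T : Type u} [Semigroup T] {x y : T} :
    leJ x y ↔ ∃ a b : WithOne T, (x : WithOne T) = a * (y : WithOne T) * b := by
  constructor
  · rintro (rfl | ⟨a, rfl⟩ | ⟨b, rfl⟩ | ⟨a, b, rfl⟩)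
    · exact ⟨1, 1, by simp⟩
    · exact ⟨a, 1, by simp [WithOne.coe_mul]⟩
    · exact ⟨1, b, by simp [WithOne.coe_mul]⟩
    · exact ⟨a, b, by simp [WithOne.coe_mul]⟩
  · rintro ⟨a, b, h⟩
    induction a using WithOne.recOneCoe with
    | one =>
      induction b using WithOne.recOneCoe with
      | one => simp only [one_mul, mul_one, WithOne.coe_inj] at h; exact Or.inl h
      | coe b =>
        rw [one_mul, ← WithOne.coe_mul, WithOne.coe_inj] at h
        exact Or.inr (Or.inr (Or.inl ⟨b, h⟩))
    | coe a =>
      induction b using WithOne.recOneCoe with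
      | one =>
        rw [mul_one, ← WithOne.coe_mul, WithOne.coe_inj] at h
        exact Or.inr (Or.inl ⟨a, h⟩)
      | coe b =>
        rw [← WithOne.coe_mul, ← WithOne.coe_mul, WithOne.coe_inj] at h
        exact Or.inr (Or.inr (Or.inr ⟨a, b, h⟩))

theorem leJ_trans {T : Type u} [Semigroup T] {x y z : T} (h1 : leJ x y) (h2 : leJ y z) :
    leJ x z := by
  rw [leJ_iff] at *
  obtain ⟨a, b, h1⟩ := h1
  obtain ⟨c, d, h2⟩ := h2
  exact ⟨a * c, d * b, by rw [h1, h2]; noncomm_ring⟩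

theorem leR_trans' {T : Type u} [Semigroup T] {x y z : T} (h1 : leR x y) (h2 : leR y z) :
    leR x z := by
  rcases h1 with rfl | ⟨a, rfl⟩ <;> rcases h2 with rfl | ⟨b, rfl⟩
  · exact Or.inl rfl
  · exact Or.inr ⟨b, rfl⟩
  · exact Or.inr ⟨a, rfl⟩
  · exact Or.inr ⟨b * a, by rw [mul_assoc]⟩

theorem grR_trans' {T : Type u} [Semigroup T] {x y z : T} (h1 : grR x y) (h2 : grR y z) :
    grR x z := ⟨leR_trans' h1.1 h2.1, leR_trans' h2.2 h1.2⟩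

theorem grR_symm' {T : Type u} [Semigroup T] {x y : T} (h : grR x y) : grR y x := ⟨h.2, h.1⟩

theorem grR_refl' {T : Type u} [Semigroup T] (x : T) : grR x x := ⟨Or.inl rfl, Or.inl rfl⟩

theorem grJ_trans' {T : Type u} [Semigroup T] {x y z : T} (h1 : grJ x y) (h2 : grJ y z) :
    grJ x z := ⟨leJ_trans h1.1 h2.1, leJ_trans h2.2 h1.2⟩

/-- Let `J` be a maximal `J`-class of a semigroup `T`, all of whose elements `z` are stable
(`z J z·u → z R z·u`).  Then every generating subset `X` of `T` meets every `R`-class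
contained in `J`; in particular `X` has at least as many elements as there are `R`-classes
in `J`. -/
theorem generating_set_meets_maximal_Jclass {T : Type u} [Semigroup T]
    (d : T) (J : Set T) (hJ : J = {y | grJ d y})
    (hmax : ∀ z ∈ J, ∀ y : T, leJ z y → leJ y z)
    (hstab : ∀ z ∈ J, ∀ u : T, grJ z (z * u) → grR z (z * u))
    (X : Set T) (hX : Subsemigroup.closure X = ⊤) :
    (∀ z ∈ J, ∃ x ∈ X, grR z x) ∧
    Cardinal.mk ↥{C : Set T | ∃ z ∈ J, C = {y | grR z y}} ≤ Cardinal.mk ↥X := by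
  classical
  have key : ∀ z ∈ J, ∃ x ∈ X, grR z x := by
    intro z hz
    have hform' : ∀ w ∈ Subsemigroup.closure X, ∃ x ∈ X, w = x ∨ ∃ u, w = x * u := by
      intro w hw
      induction hw using Subsemigroup.closure_induction with
      | mem x hx => exact ⟨x, hx, Or.inl rfl⟩
      | mul a b ha hb iha ihb =>
        obtain ⟨x, hxX, h | ⟨u, h⟩⟩ := iha
        · exact ⟨x, hxX, Or.inr ⟨b, by rw [h]⟩⟩
        · exact ⟨x, hxX, Or.inr ⟨u * b, by rw [h, mul_assoc]⟩⟩
    obtain ⟨x, hxX, h | ⟨u, h⟩⟩ := hform' z (by rw [hX]; trivial)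
    · exact ⟨x, hxX, h ▸ grR_refl' x⟩
    · subst h
      have hle : leJ (x * u) x := Or.inr (Or.inr (Or.inl ⟨u, rfl⟩))
      have hge : leJ x (x * u) := hmax _ hz _ hle
      have hJxz : grJ x (x * u) := ⟨hge, hle⟩
      have hdz : grJ d (x * u) := by rw [hJ] at hz; exact hz
      have hxJ : x ∈ J := by
        rw [hJ]
        exact grJ_trans' hdz ⟨hle, hge⟩
      have := hstab x hxJ u hJxz
      exact ⟨x, hxX, grR_symm' this⟩
  refine ⟨key, ?_⟩
  have hchoice : ∀ C : {C : Set T | ∃ z ∈ J, C = {y | grR z y}},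
      ∃ x : X, (x : T) ∈ (C : Set T) ∧ (C : Set T) = {y | grR (x : T) y} := by
    rintro ⟨C, z, hzJ, rfl⟩
    obtain ⟨x, hxX, hzx⟩ := key z hzJ
    refine ⟨⟨x, hxX⟩, hzx, ?_⟩
    ext y
    exact ⟨fun h => grR_trans' (grR_symm' hzx) h, fun h => grR_trans' hzx h⟩
  choose f hf using hchoice
  apply Cardinal.mk_le_of_injective (f := f)
  intro C₁ C₂ hEq
  apply Subtype.ext
  rw [(hf C₁).2, (hf C₂).2, hEq]
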